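/- Let S be a finite set of points in ℝ², colored red, green, and blue, with at least one point of each color, in general position (no three points of S are collinear) and with pairwise distinct x-coordinates. Then there exists a double wedge containing exactly one red point, exactly one green point, and exactly one blue point of S: that is, there exist real numbers m₁, c₁, m₂, c₂ with m₁ ≠ m₂ such that for each color, exactly one point (x, y) of S of that color satisfies (y − m₁x − c₁)(y − m₂x − c₂) < 0. -/

import Mathlib

/-
  Proof outline.

  Work with residuals `rho m p = p.2 - m * p.1`.  For generic slopes `m`
  (not a slope `slp p q` of a connecting line) the residuals are injective
  on `S` and order the points.  Call a bichromatic pair `u v` *adjacent* at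
  `m` if no point of `S` has residual strictly between them, and say that a
  *rainbow consecutive triple* (`rbw`) exists at `m` if three points of
  pairwise distinct colors occupy three consecutive residual positions.

  Main combinatorial-geometric fact (`exists_rbw`) : some generic slope
  admits a rainbow consecutive triple.  Proof by contradiction : take γ the
  point of smallest x-coordinate, b = col γ.  Consider the invariant `B m` :
  "some adjacent pair with the two colors ≠ b lies strictly (in residual)
  above γ".  The `step` lemma shows that, in the absence of rainbow triples,
  `B` survives crossing one critical slope at a time (the candidate pair is
  repaired using the unique crossing partners of its two members ; no three
  points being collinear makes crossing partners unique).  `walk` iterates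
  this across the finitely many critical slopes.  At a slope below all
  critical slopes γ is the residual minimum, and a seed adjacent pair exists
  near the slope of a segment joining two points of the other two colors,
  so `B` holds there ; at a slope above all critical slopes γ is the
  residual maximum, so `B` fails : contradiction.

  Finally (`wedge_of_rbw`) a rainbow consecutive triple at a generic slope
  is captured by a thin double wedge : choose thresholds separating the
  triple from the rest, and perturb the second slope by a small δ > 0 so
  that the two boundary lines are not parallel.
-/

namespace Stmt5

/-- residual of point `p` at slope `m` -/
def rho (m : ℝ) (p : ℝ × ℝ) : ℝ := p.2 - m * p.1

/-- slope of the line through `p` and `q` -/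
noncomputable def slp (p q : ℝ × ℝ) : ℝ := (p.2 - q.2) / (p.1 - q.1)

lemma rho_sub {p q : ℝ × ℝ} (h : p.1 ≠ q.1) (m : ℝ) :
    rho m p - rho m q = (p.1 - q.1) * (slp p q - m) := by
  have h' : p.1 - q.1 ≠ 0 := sub_ne_zero.2 h
  have hc : (p.1 - q.1) * ((p.2 - q.2) / (p.1 - q.1)) = p.2 - q.2 := by field_simp
  unfold rho slp; rw [mul_sub, hc]
  ring

lemma slp_comm {p q : ℝ × ℝ} (h : p.1 ≠ q.1) : slp p q = slp q p := by
  have h' : p.1 - q.1 ≠ 0 := sub_ne_zero.2 h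
  have h'' : q.1 - p.1 ≠ 0 := sub_ne_zero.2 (Ne.symm h)
  unfold slp
  rw [← neg_sub q.2 p.2, ← neg_sub q.1 p.1, neg_div_neg_eq]

lemma pt_eq {p w : ℝ × ℝ} (h : p.1 ≠ w.1) :
    w = (w.1 - p.1) • ((1:ℝ), slp p w) + p := by
  have h' : p.1 - w.1 ≠ 0 := sub_ne_zero.2 h
  ext
  · simp
  · simp only [Prod.snd_add, Prod.smul_snd, smul_eq_mul, slp]
    field_simp
    ring

/-- if `slp p q = slp p r` then the three points are collinear -/
lemma collinear_of_slp_eq {p q r : ℝ × ℝ} (hpq : p.1 ≠ q.1) (hpr : p.1 ≠ r.1)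
    (h : slp p q = slp p r) : Collinear ℝ ({p, q, r} : Set (ℝ × ℝ)) := by
  apply collinear_iff_of_mem (Set.mem_insert p {q, r}) |>.2
  refine ⟨(1, slp p q), ?_⟩
  rintro x hx
  rcases hx with h1 | h1 | h1
  · exact ⟨0, by simp [h1]⟩
  · exact ⟨q.1 - p.1, by rw [h1]; exact pt_eq hpq⟩
  · exact ⟨r.1 - p.1, by rw [h1, h]; exact pt_eq hpr⟩

def btwn (x a b : ℝ) : Prop := (a < x ∧ x < b) ∨ (b < x ∧ x < a)
def adj (S : Finset (ℝ × ℝ)) (m : ℝ) (u v : ℝ × ℝ) : Prop :=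
  ∀ z ∈ S, z ≠ u → z ≠ v → ¬ btwn (rho m z) (rho m u) (rho m v)
def rbw (S : Finset (ℝ × ℝ)) (col : ℝ × ℝ → Fin 3) (m : ℝ) : Prop :=
  ∃ u ∈ S, ∃ v ∈ S, ∃ w ∈ S, col u ≠ col v ∧ col u ≠ col w ∧ col v ≠ col w ∧
    rho m u < rho m v ∧ rho m v < rho m w ∧
    ∀ z ∈ S, z ≠ u → z ≠ v → z ≠ w → (rho m z < rho m u ∨ rho m w < rho m z)
def flip (m m' : ℝ) (p q : ℝ × ℝ) : Prop :=
  (rho m p - rho m q) * (rho m' p - rho m' q) < 0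
def inj (S : Finset (ℝ × ℝ)) (m : ℝ) : Prop :=
  ∀ p ∈ S, ∀ q ∈ S, p ≠ q → rho m p ≠ rho m q
lemma flip_symm {m m' : ℝ} {p q : ℝ × ℝ} (h : flip m m' p q) : flip m m' q p := by
  unfold flip at *; nlinarith
lemma flip_swap {m m' : ℝ} {p q : ℝ × ℝ} (h : flip m m' p q) : flip m' m p q := by
  unfold flip at *; nlinarith
lemma flip_ne {m m' : ℝ} {p q : ℝ × ℝ} (h : flip m m' p q) : p ≠ q := by
  rintro rfl; unfold flip at h; nlinarith
lemma not_flip_lt {m m' : ℝ} {p q : ℝ × ℝ} (h : ¬ flip m m' p q)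
    (hne : rho m' p ≠ rho m' q) (hlt : rho m p < rho m q) : rho m' p < rho m' q := by
  unfold flip at h; push_neg at h
  rcases lt_or_gt_of_ne hne with h1 | h1
  · exact h1
  · nlinarith
lemma flip_gt {m m' : ℝ} {p q : ℝ × ℝ} (h : flip m m' p q)
    (hlt : rho m p < rho m q) : rho m' q < rho m' p := by
  unfold flip at h; nlinarith [sq_nonneg (rho m' p - rho m' q)]
lemma flip_of {m m' : ℝ} {p q : ℝ × ℝ} (h1 : rho m p < rho m q)
    (h2 : rho m' q < rho m' p) : flip m m' p q := by
  unfold flip; nlinarith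
lemma adj_comm {S : Finset (ℝ × ℝ)} {m : ℝ} {u v : ℝ × ℝ} (h : adj S m u v) :
    adj S m v u := fun z hz h1 h2 hb => h z hz h2 h1 (Or.symm hb)

section Main

variable {S : Finset (ℝ × ℝ)} {col : ℝ × ℝ → Fin 3} {m m' : ℝ}

lemma partner_unique
    (hgen : ∀ p ∈ S, ∀ q ∈ S, ∀ r ∈ S, p ≠ q → p ≠ r → q ≠ r →
      ¬ Collinear ℝ ({p, q, r} : Set (ℝ × ℝ)))
    (hx : ∀ p ∈ S, ∀ q ∈ S, p ≠ q → p.1 ≠ q.1)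
    (hs : ∀ p ∈ S, ∀ q ∈ S, p ≠ q → flip m m' p q →
          ∀ p' ∈ S, ∀ q' ∈ S, p' ≠ q' → flip m m' p' q' → slp p q = slp p' q')
    {u v w : ℝ × ℝ} (hu : u ∈ S) (hv : v ∈ S) (hw : w ∈ S) (hvw : v ≠ w)
    (h1 : flip m m' u v) (h2 : flip m m' u w) : False := by
  have huv := flip_ne h1
  have huw := flip_ne h2
  have heq : slp u v = slp u w := hs u hu v hv huv h1 u hu w hw huw h2
  exact hgen u hu v hv w hw huv huw hvw
    (collinear_of_slp_eq (hx u hu v hv huv) (hx u hu w hw huw) heq)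

lemma flip_adj
    (hgen : ∀ p ∈ S, ∀ q ∈ S, ∀ r ∈ S, p ≠ q → p ≠ r → q ≠ r →
      ¬ Collinear ℝ ({p, q, r} : Set (ℝ × ℝ)))
    (hx : ∀ p ∈ S, ∀ q ∈ S, p ≠ q → p.1 ≠ q.1)
    (hs : ∀ p ∈ S, ∀ q ∈ S, p ≠ q → flip m m' p q →
          ∀ p' ∈ S, ∀ q' ∈ S, p' ≠ q' → flip m m' p' q' → slp p q = slp p' q')
    (hm' : inj S m')
    {u v : ℝ × ℝ} (hu : u ∈ S) (hv : v ∈ S) (hf : flip m m' u v) : adj S m u v := by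
  intro z hz hzu hzv hb
  by_cases h1 : flip m m' z u
  · exact partner_unique hgen hx hs hu hz hv hzv (flip_symm h1) hf
  by_cases h2 : flip m m' z v
  · exact partner_unique hgen hx hs hv hz hu hzu (flip_symm h2) (flip_symm hf)
  · have hne1 : rho m' z ≠ rho m' u := hm' z hz u hu hzu
    have hne2 : rho m' z ≠ rho m' v := hm' z hz v hv hzv
    rcases hb with ⟨hb1, hb2⟩ | ⟨hb1, hb2⟩
    · have e1 : rho m' u < rho m' z :=
        not_flip_lt (fun h => h1 (flip_symm h)) hne1.symm hb1
      have e2 : rho m' z < rho m' v := not_flip_lt h2 hne2 hb2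
      have e3 : rho m' v < rho m' u := flip_gt hf (lt_trans hb1 hb2)
      linarith
    · have e1 : rho m' v < rho m' z :=
        not_flip_lt (fun h => h2 (flip_symm h)) hne2.symm hb1
      have e2 : rho m' z < rho m' u := not_flip_lt h1 hne1 hb2
      have e3 : rho m' u < rho m' v := flip_gt (flip_symm hf) (lt_trans hb1 hb2)
      linarith

lemma triple_col (hnrb : ¬ rbw S col m) (hm : inj S m)
    {a b c : ℝ × ℝ} (ha : a ∈ S) (hb : b ∈ S) (hc : c ∈ S)
    (h1 : rho m a < rho m b) (h2 : rho m b < rho m c)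
    (hab : adj S m a b) (hbc : adj S m b c) :
    col a = col b ∨ col a = col c ∨ col b = col c := by
  by_contra hcon
  push_neg at hcon
  obtain ⟨c1, c2, c3⟩ := hcon
  apply hnrb
  refine ⟨a, ha, b, hb, c, hc, c1, c2, c3, h1, h2, ?_⟩
  intro z hz hza hzb hzc
  by_contra hzc'
  push_neg at hzc'
  obtain ⟨g1, g2⟩ := hzc'
  have hza' : rho m a < rho m z := lt_of_le_of_ne g1 (Ne.symm (hm z hz a ha hza))
  have hzc'' : rho m z < rho m c := lt_of_le_of_ne g2 (hm z hz c hc hzc)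
  rcases lt_trichotomy (rho m z) (rho m b) with h | h | h
  · exact hab z hz hza hzb (Or.inl ⟨hza', h⟩)
  · exact hm z hz b hb hzb h
  · exact hbc z hz hzb hzc (Or.inl ⟨h, hzc''⟩)

/-- The key step lemma : an adjacent bichromatic pair survives a single
critical slope, and everything below it of a third color stays below. -/
lemma step
    (hgen : ∀ p ∈ S, ∀ q ∈ S, ∀ r ∈ S, p ≠ q → p ≠ r → q ≠ r →
      ¬ Collinear ℝ ({p, q, r} : Set (ℝ × ℝ)))
    (hx : ∀ p ∈ S, ∀ q ∈ S, p ≠ q → p.1 ≠ q.1)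
    (hm : inj S m) (hm' : inj S m')
    (hs : ∀ p ∈ S, ∀ q ∈ S, p ≠ q → flip m m' p q →
          ∀ p' ∈ S, ∀ q' ∈ S, p' ≠ q' → flip m m' p' q' → slp p q = slp p' q')
    (hnrb : ¬ rbw S col m)
    {u v : ℝ × ℝ} (hu : u ∈ S) (hv : v ∈ S)
    (hcol : col u ≠ col v) (hord : rho m u < rho m v) (hadj : adj S m u v) :
    ∃ a ∈ S, ∃ b ∈ S, adj S m' a b ∧
      ((col a = col u ∧ col b = col v) ∨ (col a = col v ∧ col b = col u)) ∧
      ∀ g ∈ S, col g ≠ col u → col g ≠ col v → rho m g < rho m u →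
        (rho m' g < rho m' a ∧ rho m' g < rho m' b) := by
  have huv : u ≠ v := fun h => hcol (h ▸ rfl)
  -- symmetric versions of hs
  have hs' : ∀ p ∈ S, ∀ q ∈ S, p ≠ q → flip m' m p q →
      ∀ p' ∈ S, ∀ q' ∈ S, p' ≠ q' → flip m' m p' q' → slp p q = slp p' q' :=
    fun p hp q hq hpq hf p' hp' q' hq' hpq' hf' =>
      hs p hp q hq hpq (flip_swap hf) p' hp' q' hq' hpq' (flip_swap hf')
  -- generic facts about "g" points (used in every branch)
  by_cases hfuv : flip m m' u v
  · -- the pair itself crosses : it stays adjacent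
    refine ⟨u, hu, v, hv, flip_adj hgen hx hs' hm hu hv (flip_swap hfuv),
      Or.inl ⟨rfl, rfl⟩, ?_⟩
    intro g hg hgu hgv hglt
    have hgu' : g ≠ u := fun h => hgu (h ▸ rfl)
    have hgv' : g ≠ v := fun h => hgv (h ▸ rfl)
    have h1 : ¬ flip m m' g u := fun h =>
      partner_unique hgen hx hs hu hg hv hgv' (flip_symm h) hfuv
    have h2 : ¬ flip m m' g v := fun h =>
      partner_unique hgen hx hs hv hg hu hgu' (flip_symm h) (flip_symm hfuv)
    exact ⟨not_flip_lt h1 (hm' g hg u hu hgu') hglt,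
      not_flip_lt h2 (hm' g hg v hv hgv') (lt_trans hglt hord)⟩
  · have hord' : rho m' u < rho m' v :=
      not_flip_lt hfuv (hm' u hu v hv huv) hord
    -- helper building adjacency at m' for a pair inside the old gap
    have adj_mk : ∀ (a b : ℝ × ℝ), a ∈ S →
        rho m' u ≤ rho m' a → rho m' a < rho m' b → rho m' b ≤ rho m' v →
        (∀ q ∈ S, q ≠ a → q ≠ b → ¬ flip m m' q u) →
        (∀ q ∈ S, q ≠ a → q ≠ b → ¬ flip m m' q v) →
        adj S m' a b := by
      intro a b haS h1 h2 h3 hA hB q hq hqa hqb hb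
      have hval : rho m' a < rho m' q ∧ rho m' q < rho m' b := by
        rcases hb with ⟨x1, x2⟩ | ⟨x1, x2⟩
        · exact ⟨x1, x2⟩
        · constructor <;> linarith
      have hqu : q ≠ u := fun h => by rw [h] at hval; linarith
      have hqv : q ≠ v := fun h => by rw [h] at hval; linarith
      have hq_out : rho m q < rho m u ∨ rho m v < rho m q := by
        rcases lt_trichotomy (rho m q) (rho m u) with h | h | h
        · exact Or.inl h
        · exact absurd h (hm q hq u hu hqu)
        · rcases lt_trichotomy (rho m q) (rho m v) with h' | h' | h'
          · exact absurd (Or.inl ⟨h, h'⟩) (hadj q hq hqu hqv)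
          · exact absurd h' (hm q hq v hv hqv)
          · exact Or.inr h'
      rcases hq_out with h | h
      · exact hA q hq hqa hqb (flip_of h (by linarith))
      · exact hB q hq hqa hqb (flip_symm (flip_of h (by linarith)))
    by_cases hwE : ∃ w ∈ S, flip m m' w u
    · obtain ⟨w, hwS, hwu⟩ := hwE
      have hwnu : w ≠ u := flip_ne hwu
      have hwnv : w ≠ v := fun h => hfuv (flip_symm (h ▸ hwu))
      have hadj_wu : adj S m w u := flip_adj hgen hx hs hm' hwS hu hwu
      have hwlt : rho m w < rho m u := by
        rcases lt_trichotomy (rho m w) (rho m u) with h | h | h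
        · exact h
        · exact absurd h (hm w hwS u hu hwnu)
        · exfalso
          rcases lt_trichotomy (rho m w) (rho m v) with h2 | h2 | h2
          · exact hadj w hwS hwnu hwnv (Or.inl ⟨h, h2⟩)
          · exact hm w hwS v hv hwnv h2
          · exact hadj_wu v hv (Ne.symm hwnv) (Ne.symm huv) (Or.inr ⟨hord, h2⟩)
      have hcw : col w = col u ∨ col w = col v := by
        rcases triple_col hnrb hm hwS hu hv hwlt hord hadj_wu hadj with h | h | h
        · exact Or.inl h
        · exact Or.inr h
        · exact absurd h hcol
      have huw' : rho m' u < rho m' w := flip_gt hwu hwlt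
      have hadj_uw' : adj S m' u w :=
        flip_adj hgen hx hs' hm hu hwS (flip_swap (flip_symm hwu))
      have hgw_lt : ∀ g ∈ S, g ≠ w → g ≠ u → rho m g < rho m u → rho m g < rho m w := by
        intro g hg hgw hgu hglt
        rcases lt_trichotomy (rho m g) (rho m w) with h | h | h
        · exact h
        · exact absurd h (hm g hg w hwS hgw)
        · exact absurd (Or.inl ⟨h, hglt⟩) (hadj_wu g hg hgw hgu)
      -- no-crossing facts relative to the partner w
      have nfu : ∀ q ∈ S, q ≠ w → ¬ flip m m' q u := fun q hq hqw h =>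
        partner_unique hgen hx hs hu hq hwS hqw (flip_symm h) (flip_symm hwu)
      have nfw : ∀ q ∈ S, q ≠ u → ¬ flip m m' q w := fun q hq hqu h =>
        partner_unique hgen hx hs hwS hq hu hqu (flip_symm h) hwu
      by_cases hzE : ∃ z ∈ S, flip m m' z v
      · obtain ⟨z, hzS, hzv⟩ := hzE
        have hznv : z ≠ v := flip_ne hzv
        have hznu : z ≠ u := fun h => hfuv (h ▸ hzv)
        have hadj_zv : adj S m z v := flip_adj hgen hx hs hm' hzS hv hzv
        have hzgt : rho m v < rho m z := by
          rcases lt_trichotomy (rho m v) (rho m z) with h | h | h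
          · exact h
          · exact absurd h.symm (hm z hzS v hv hznv)
          · exfalso
            rcases lt_trichotomy (rho m z) (rho m u) with h2 | h2 | h2
            · exact hadj_zv u hu (Ne.symm hznu) huv (Or.inl ⟨h2, hord⟩)
            · exact hm z hzS u hu hznu h2
            · exact hadj z hzS hznu hznv (Or.inl ⟨h2, h⟩)
        have hcz : col z = col u ∨ col z = col v := by
          rcases triple_col hnrb hm hu hv hzS hord hzgt hadj (adj_comm hadj_zv)
            with h | h | h
          · exact absurd h hcol
          · exact Or.inl h.symm
          · exact Or.inr h.symm
        have hzv' : rho m' z < rho m' v := flip_gt (flip_symm hzv) hzgt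
        have hadj_zv'' : adj S m' z v :=
          flip_adj hgen hx hs' hm hzS hv (flip_swap hzv)
        have hwnz : w ≠ z := fun h => by
          rw [h] at hwlt; linarith
        have nfv : ∀ q ∈ S, q ≠ z → ¬ flip m m' q v := fun q hq hqz h =>
          partner_unique hgen hx hs hv hq hzS hqz (flip_symm h) (flip_symm hzv)
        have nfz : ∀ q ∈ S, q ≠ v → ¬ flip m m' q z := fun q hq hqv h =>
          partner_unique hgen hx hs hzS hq hv hqv (flip_symm h) hzv
        rcases hcw with hcwU | hcwV
        · rcases hcz with hczU | hczV
          · -- witness (z, v)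
            refine ⟨z, hzS, v, hv, hadj_zv'', Or.inl ⟨hczU, rfl⟩, ?_⟩
            intro g hg hgu hgv hglt
            have hgu' : g ≠ u := fun h => hgu (h ▸ rfl)
            have hgv' : g ≠ v := fun h => hgv (h ▸ rfl)
            have hgz : g ≠ z := fun h => hgu (h ▸ hczU)
            have e1 : rho m g < rho m z := by linarith
            exact ⟨not_flip_lt (nfz g hg hgv') (hm' g hg z hzS hgz) e1,
              not_flip_lt (nfv g hg hgz) (hm' g hg v hv hgv') (by linarith)⟩
          · -- witness (w, z)
            have hwz' : rho m' w < rho m' z := by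
              have : rho m w < rho m z := by linarith
              exact not_flip_lt (nfz w hwS hwnv) (hm' w hwS z hzS hwnz) this
            refine ⟨w, hwS, z, hzS, ?_, Or.inl ⟨hcwU, hczV⟩, ?_⟩
            · refine adj_mk w z hwS (le_of_lt huw') hwz' (le_of_lt hzv')
                (fun q hq hqw _ h => nfu q hq hqw h)
                (fun q hq _ hqz h => nfv q hq hqz h)
            · intro g hg hgu hgv hglt
              have hgu' : g ≠ u := fun h => hgu (h ▸ rfl)
              have hgv' : g ≠ v := fun h => hgv (h ▸ rfl)
              have hgw : g ≠ w := fun h => hgu (h ▸ hcwU)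
              have hgz : g ≠ z := fun h => hgv (h ▸ hczV)
              have e1 : rho m g < rho m w := hgw_lt g hg hgw hgu' hglt
              have e2 : rho m g < rho m z := by linarith
              exact ⟨not_flip_lt (nfw g hg hgu') (hm' g hg w hwS hgw) e1,
                not_flip_lt (nfz g hg hgv') (hm' g hg z hzS hgz) e2⟩
        · -- witness (u, w), independent of z
          refine ⟨u, hu, w, hwS, hadj_uw', Or.inl ⟨rfl, hcwV⟩, ?_⟩
          intro g hg hgu hgv hglt
          have hgu' : g ≠ u := fun h => hgu (h ▸ rfl)
          have hgw : g ≠ w := fun h => hgv (h ▸ hcwV)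
          have e1 : rho m g < rho m w := hgw_lt g hg hgw hgu' hglt
          exact ⟨not_flip_lt (nfu g hg hgw) (hm' g hg u hu hgu') hglt,
            not_flip_lt (nfw g hg hgu') (hm' g hg w hwS hgw) e1⟩
      · -- u has a partner w, v has none
        have nfv : ∀ q ∈ S, ¬ flip m m' q v := fun q hq h => hzE ⟨q, hq, h⟩
        rcases hcw with hcwU | hcwV
        · -- witness (w, v)
          have hwv' : rho m' w < rho m' v := by
            have : rho m w < rho m v := by linarith
            exact not_flip_lt (nfv w hwS) (hm' w hwS v hv hwnv) this
          refine ⟨w, hwS, v, hv, ?_, Or.inl ⟨hcwU, rfl⟩, ?_⟩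
          · refine adj_mk w v hwS (le_of_lt huw') hwv' le_rfl
              (fun q hq hqw _ h => nfu q hq hqw h)
              (fun q hq _ _ h => nfv q hq h)
          · intro g hg hgu hgv hglt
            have hgu' : g ≠ u := fun h => hgu (h ▸ rfl)
            have hgv' : g ≠ v := fun h => hgv (h ▸ rfl)
            have hgw : g ≠ w := fun h => hgu (h ▸ hcwU)
            have e1 : rho m g < rho m w := hgw_lt g hg hgw hgu' hglt
            exact ⟨not_flip_lt (nfw g hg hgu') (hm' g hg w hwS hgw) e1,
              not_flip_lt (nfv g hg) (hm' g hg v hv hgv') (by linarith)⟩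
        · -- witness (u, w)
          refine ⟨u, hu, w, hwS, hadj_uw', Or.inl ⟨rfl, hcwV⟩, ?_⟩
          intro g hg hgu hgv hglt
          have hgu' : g ≠ u := fun h => hgu (h ▸ rfl)
          have hgw : g ≠ w := fun h => hgv (h ▸ hcwV)
          have e1 : rho m g < rho m w := hgw_lt g hg hgw hgu' hglt
          exact ⟨not_flip_lt (nfu g hg hgw) (hm' g hg u hu hgu') hglt,
            not_flip_lt (nfw g hg hgu') (hm' g hg w hwS hgw) e1⟩
    · -- u has no partner
      have nfu : ∀ q ∈ S, ¬ flip m m' q u := fun q hq h => hwE ⟨q, hq, h⟩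
      by_cases hzE : ∃ z ∈ S, flip m m' z v
      · obtain ⟨z, hzS, hzv⟩ := hzE
        have hznv : z ≠ v := flip_ne hzv
        have hznu : z ≠ u := fun h => hfuv (h ▸ hzv)
        have hadj_zv : adj S m z v := flip_adj hgen hx hs hm' hzS hv hzv
        have hzgt : rho m v < rho m z := by
          rcases lt_trichotomy (rho m v) (rho m z) with h | h | h
          · exact h
          · exact absurd h.symm (hm z hzS v hv hznv)
          · exfalso
            rcases lt_trichotomy (rho m z) (rho m u) with h2 | h2 | h2
            · exact hadj_zv u hu (Ne.symm hznu) huv (Or.inl ⟨h2, hord⟩)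
            · exact hm z hzS u hu hznu h2
            · exact hadj z hzS hznu hznv (Or.inl ⟨h2, h⟩)
        have hcz : col z = col u ∨ col z = col v := by
          rcases triple_col hnrb hm hu hv hzS hord hzgt hadj (adj_comm hadj_zv)
            with h | h | h
          · exact absurd h hcol
          · exact Or.inl h.symm
          · exact Or.inr h.symm
        have hzv' : rho m' z < rho m' v := flip_gt (flip_symm hzv) hzgt
        have hadj_zv'' : adj S m' z v :=
          flip_adj hgen hx hs' hm hzS hv (flip_swap hzv)
        have nfv : ∀ q ∈ S, q ≠ z → ¬ flip m m' q v := fun q hq hqz h =>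
          partner_unique hgen hx hs hv hq hzS hqz (flip_symm h) (flip_symm hzv)
        have nfz : ∀ q ∈ S, q ≠ v → ¬ flip m m' q z := fun q hq hqv h =>
          partner_unique hgen hx hs hzS hq hv hqv (flip_symm h) hzv
        rcases hcz with hczU | hczV
        · -- witness (z, v)
          refine ⟨z, hzS, v, hv, hadj_zv'', Or.inl ⟨hczU, rfl⟩, ?_⟩
          intro g hg hgu hgv hglt
          have hgv' : g ≠ v := fun h => hgv (h ▸ rfl)
          have hgz : g ≠ z := fun h => hgu (h ▸ hczU)
          have e1 : rho m g < rho m z := by linarith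
          exact ⟨not_flip_lt (nfz g hg hgv') (hm' g hg z hzS hgz) e1,
            not_flip_lt (nfv g hg hgz) (hm' g hg v hv hgv') (by linarith)⟩
        · -- witness (u, z)
          have huz' : rho m' u < rho m' z := by
            have : rho m u < rho m z := by linarith
            exact not_flip_lt (fun h => nfu z hzS (flip_symm h))
              (hm' u hu z hzS (Ne.symm hznu)) this
          refine ⟨u, hu, z, hzS, ?_, Or.inl ⟨rfl, hczV⟩, ?_⟩
          · refine adj_mk u z hu le_rfl huz' (le_of_lt hzv')
              (fun q hq _ _ h => nfu q hq h)
              (fun q hq _ hqz h => nfv q hq hqz h)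
          · intro g hg hgu hgv hglt
            have hgu' : g ≠ u := fun h => hgu (h ▸ rfl)
            have hgz : g ≠ z := fun h => hgv (h ▸ hczV)
            have e1 : rho m g < rho m z := by linarith
            exact ⟨not_flip_lt (nfu g hg) (hm' g hg u hu hgu') hglt,
              not_flip_lt (nfz g hg (fun h => hgv (h ▸ rfl))) (hm' g hg z hzS hgz) e1⟩
      · -- neither u nor v has a partner : the pair survives as is
        have nfv : ∀ q ∈ S, ¬ flip m m' q v := fun q hq h => hzE ⟨q, hq, h⟩
        refine ⟨u, hu, v, hv, ?_, Or.inl ⟨rfl, rfl⟩, ?_⟩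
        · exact adj_mk u v hu le_rfl hord' le_rfl
            (fun q hq _ _ h => nfu q hq h) (fun q hq _ _ h => nfv q hq h)
        · intro g hg hgu hgv hglt
          have hgu' : g ≠ u := fun h => hgu (h ▸ rfl)
          have hgv' : g ≠ v := fun h => hgv (h ▸ rfl)
          exact ⟨not_flip_lt (nfu g hg) (hm' g hg u hu hgu') hglt,
            not_flip_lt (nfv g hg) (hm' g hg v hv hgv') (by linarith)⟩


end Main

noncomputable def crit (S : Finset (ℝ × ℝ)) : Finset ℝ :=
  S.offDiag.image fun pq => slp pq.1 pq.2

attribute [local instance] Classical.propDecidable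

section W
variable {S : Finset (ℝ × ℝ)}

lemma slp_mem_crit {p q : ℝ × ℝ} (hp : p ∈ S) (hq : q ∈ S) (hpq : p ≠ q) :
    slp p q ∈ crit S :=
  Finset.mem_image.2 ⟨(p, q), Finset.mem_offDiag.2 ⟨hp, hq, hpq⟩, rfl⟩

lemma inj_of_not_crit (hx : ∀ p ∈ S, ∀ q ∈ S, p ≠ q → p.1 ≠ q.1)
    {m : ℝ} (hm : m ∉ crit S) : inj S m := by
  intro p hp q hq hpq heq
  have h1 := rho_sub (hx p hp q hq hpq) m
  rw [heq, sub_self] at h1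
  have h2 : p.1 - q.1 ≠ 0 := sub_ne_zero.2 (hx p hp q hq hpq)
  have : slp p q = m := by
    rcases mul_eq_zero.1 h1.symm with h | h
    · exact absurd h h2
    · exact sub_eq_zero.1 h
  exact hm (this ▸ slp_mem_crit hp hq hpq)

lemma flip_btwn_slp (hx : ∀ p ∈ S, ∀ q ∈ S, p ≠ q → p.1 ≠ q.1)
    {m m' : ℝ} {p q : ℝ × ℝ} (hp : p ∈ S) (hq : q ∈ S) (hpq : p ≠ q)
    (hf : flip m m' p q) : btwn (slp p q) m m' := by
  have h1 := rho_sub (hx p hp q hq hpq) m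
  have h2 := rho_sub (hx p hp q hq hpq) m'
  unfold flip at hf
  rw [h1, h2] at hf
  have h3 : (slp p q - m) * (slp p q - m') < 0 := by nlinarith [sq_nonneg (p.1 - q.1)]
  rcases lt_trichotomy m m' with h | h | h
  · left
    constructor <;> nlinarith
  · exfalso; rw [h] at h3; nlinarith [sq_nonneg (slp p q - m')]
  · right
    constructor <;> nlinarith

/-- propagate a property across all critical slopes, one at a time -/
lemma walk {P : ℝ → Prop}
    (hstep : ∀ m m' : ℝ, m ∉ crit S → m' ∉ crit S →
      (∀ s ∈ crit S, btwn s m m' → ∀ s' ∈ crit S, btwn s' m m' → s = s') →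
      P m → P m') :
    ∀ m m' : ℝ, m ∉ crit S → m' ∉ crit S → P m → P m' := by
  have key : ∀ n : ℕ, ∀ m m' : ℝ, m ∉ crit S → m' ∉ crit S →
      ((crit S).filter (fun s => btwn s m m')).card = n → P m → P m' := by
    intro n
    induction n using Nat.strong_induction_on with
    | _ n IH =>
      intro m m' hm hm' hcard hP
      rcases Nat.eq_zero_or_pos n with hn | hn
      · -- no critical slope in between
        subst hn
        have hempty : (crit S).filter (fun s => btwn s m m') = ∅ :=
          Finset.card_eq_zero.1 hcard
        refine hstep m m' hm hm' ?_ hP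
        intro t htC htb t' _ _
        exfalso
        have h1 : t ∈ (crit S).filter (fun s => btwn s m m') :=
          Finset.mem_filter.2 ⟨htC, htb⟩
        rw [hempty] at h1
        exact Finset.notMem_empty t h1
      · set T := (crit S).filter (fun s => btwn s m m') with hT
        have hTne : T.Nonempty := Finset.card_pos.1 (hcard ▸ hn)
        rcases lt_trichotomy m m' with hmm | hmm | hmm
        · -- increasing direction
          set s := T.min' hTne with hs
          have hsT : s ∈ T := T.min'_mem hTne
          have hsb : m < s ∧ s < m' := by
            have := (Finset.mem_filter.1 hsT).2
            rcases this with h | h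
            · exact h
            · exact absurd hmm (by linarith [h.1, h.2])
          set s' := if h : (T.erase s).Nonempty then (T.erase s).min' h else m' with hs'
          have hss' : s < s' ∧ s' ≤ m' := by
            by_cases h : (T.erase s).Nonempty
            · simp only [hs', dif_pos h]
              have h1 := (T.erase s).min'_mem h
              have h2 : (T.erase s).min' h ∈ T := Finset.mem_of_mem_erase h1
              have h3 : (T.erase s).min' h ≠ s := Finset.ne_of_mem_erase h1
              have h4 : s ≤ (T.erase s).min' h := T.min'_le _ h2
              have h5 := (Finset.mem_filter.1 h2).2
              rcases h5 with h5 | h5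
              · exact ⟨lt_of_le_of_ne h4 (Ne.symm h3), le_of_lt h5.2⟩
              · exact absurd hmm (by linarith [h5.1, h5.2])
            · simp only [hs', dif_neg h]
              exact ⟨hsb.2, le_refl m'⟩
          set μ := (s + s') / 2 with hμ
          have hμ1 : s < μ := by rw [hμ]; linarith [hss'.1]
          have hμ2 : μ < s' := by rw [hμ]; linarith [hss'.1]
          have hμm' : μ < m' := lt_of_lt_of_le hμ2 hss'.2
          have hμm : m < μ := lt_trans hsb.1 hμ1
          -- any element of T below s' equals s
          have hTlow : ∀ t ∈ T, t < s' → t = s := by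
            intro t htT htl
            by_contra hts
            have h1 : t ∈ T.erase s := Finset.mem_erase.2 ⟨hts, htT⟩
            have h2 : (T.erase s).Nonempty := ⟨t, h1⟩
            have h3 : s' ≤ t := by
              rw [hs', dif_pos h2]; exact (T.erase s).min'_le t h1
            linarith
          have hμC : μ ∉ crit S := by
            intro hc
            have : μ ∈ T := Finset.mem_filter.2 ⟨hc, Or.inl ⟨hμm, hμm'⟩⟩
            have := hTlow μ this hμ2
            linarith
          -- step from m to μ
          have hP2 : P μ := by
            refine hstep m μ hm hμC ?_ hP
            intro t htC htb t' ht'C ht'b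
            have h1 : t = s := by
              apply hTlow t
              · refine Finset.mem_filter.2 ⟨htC, ?_⟩
                rcases htb with h | h
                · exact Or.inl ⟨h.1, lt_trans h.2 hμm'⟩
                · exact absurd hμm (by linarith [h.1, h.2])
              · rcases htb with h | h
                · exact lt_trans h.2 hμ2
                · exact absurd hμm (by linarith [h.1, h.2])
            have h2 : t' = s := by
              apply hTlow t'
              · refine Finset.mem_filter.2 ⟨ht'C, ?_⟩
                rcases ht'b with h | h
                · exact Or.inl ⟨h.1, lt_trans h.2 hμm'⟩
                · exact absurd hμm (by linarith [h.1, h.2])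
              · rcases ht'b with h | h
                · exact lt_trans h.2 hμ2
                · exact absurd hμm (by linarith [h.1, h.2])
            rw [h1, h2]
          -- recurse on (μ, m')
          have hT' : (crit S).filter (fun t => btwn t μ m') = T.erase s := by
            ext t
            constructor
            · intro ht
              obtain ⟨htC, htb⟩ := Finset.mem_filter.1 ht
              have htb' : μ < t ∧ t < m' := by
                rcases htb with h | h
                · exact h
                · exact absurd hμm' (by linarith [h.1, h.2])
              refine Finset.mem_erase.2 ⟨fun h => by rw [h] at htb'; linarith [hμ1, htb'.1], ?_⟩
              rw [hT]
              exact Finset.mem_filter.2 ⟨htC, Or.inl ⟨lt_trans hμm htb'.1, htb'.2⟩⟩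
            · intro ht
              have hts : t ≠ s := Finset.ne_of_mem_erase ht
              have htT : t ∈ T := Finset.mem_of_mem_erase ht
              obtain ⟨htC, htb⟩ := Finset.mem_filter.1 (hT ▸ htT)
              have htb' : m < t ∧ t < m' := by
                rcases htb with h | h
                · exact h
                · exact absurd hmm (by linarith [h.1, h.2])
              have h3 : s' ≤ t := by
                by_contra hc
                push_neg at hc
                exact hts (hTlow t htT hc)
              exact Finset.mem_filter.2 ⟨htC, Or.inl ⟨lt_of_lt_of_le hμ2 h3, htb'.2⟩⟩
          have hcard' : ((crit S).filter (fun t => btwn t μ m')).card = n - 1 := by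
            rw [hT', Finset.card_erase_of_mem hsT, hcard]
          exact IH (n - 1) (Nat.sub_lt hn Nat.one_pos) μ m' hμC hm' hcard' hP2
        · exact hmm ▸ hP
        · -- decreasing direction : mirror
          set s := T.max' hTne with hs
          have hsT : s ∈ T := T.max'_mem hTne
          have hsb : m' < s ∧ s < m := by
            have := (Finset.mem_filter.1 hsT).2
            rcases this with h | h
            · exact absurd hmm (by linarith [h.1, h.2])
            · exact h
          set s' := if h : (T.erase s).Nonempty then (T.erase s).max' h else m' with hs'
          have hss' : s' < s ∧ m' ≤ s' := by
            by_cases h : (T.erase s).Nonempty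
            · simp only [hs', dif_pos h]
              have h1 := (T.erase s).max'_mem h
              have h2 : (T.erase s).max' h ∈ T := Finset.mem_of_mem_erase h1
              have h3 : (T.erase s).max' h ≠ s := Finset.ne_of_mem_erase h1
              have h4 : (T.erase s).max' h ≤ s := T.le_max' _ h2
              have h5 := (Finset.mem_filter.1 h2).2
              rcases h5 with h5 | h5
              · exact absurd hmm (by linarith [h5.1, h5.2])
              · exact ⟨lt_of_le_of_ne h4 h3, le_of_lt h5.1⟩
            · simp only [hs', dif_neg h]
              exact ⟨hsb.1, le_refl m'⟩
          set μ := (s + s') / 2 with hμ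
          have hμ1 : μ < s := by rw [hμ]; linarith [hss'.1]
          have hμ2 : s' < μ := by rw [hμ]; linarith [hss'.1]
          have hμm' : m' < μ := lt_of_le_of_lt hss'.2 hμ2
          have hμm : μ < m := lt_trans hμ1 hsb.2
          have hThigh : ∀ t ∈ T, s' < t → t = s := by
            intro t htT htl
            by_contra hts
            have h1 : t ∈ T.erase s := Finset.mem_erase.2 ⟨hts, htT⟩
            have h2 : (T.erase s).Nonempty := ⟨t, h1⟩
            have h3 : t ≤ s' := by
              rw [hs', dif_pos h2]; exact (T.erase s).le_max' t h1
            linarith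
          have hμC : μ ∉ crit S := by
            intro hc
            have : μ ∈ T := Finset.mem_filter.2 ⟨hc, Or.inr ⟨hμm', hμm⟩⟩
            have := hThigh μ this hμ2
            linarith
          have hP2 : P μ := by
            refine hstep m μ hm hμC ?_ hP
            intro t htC htb t' ht'C ht'b
            have key2 : ∀ r : ℝ, r ∈ crit S → btwn r m μ → r = s := by
              intro r hrC hrb
              have hrb' : μ < r ∧ r < m := by
                rcases hrb with h | h
                · exact absurd hμm (by linarith [h.1, h.2])
                · exact h
              apply hThigh r
              · exact Finset.mem_filter.2 ⟨hrC,
                  Or.inr ⟨lt_trans hμm' hrb'.1, hrb'.2⟩⟩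
              · linarith [hμ2, hrb'.1]
            rw [key2 t htC htb, key2 t' ht'C ht'b]
          have hT' : (crit S).filter (fun t => btwn t μ m') = T.erase s := by
            ext t
            constructor
            · intro ht
              obtain ⟨htC, htb⟩ := Finset.mem_filter.1 ht
              have htb' : m' < t ∧ t < μ := by
                rcases htb with h | h
                · exact absurd hμm' (by linarith [h.1, h.2])
                · exact h
              refine Finset.mem_erase.2 ⟨fun h => by rw [h] at htb'; linarith [hμ1, htb'.2], ?_⟩
              rw [hT]
              exact Finset.mem_filter.2 ⟨htC, Or.inr ⟨htb'.1, lt_trans htb'.2 hμm⟩⟩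
            · intro ht
              have hts : t ≠ s := Finset.ne_of_mem_erase ht
              have htT : t ∈ T := Finset.mem_of_mem_erase ht
              obtain ⟨htC, htb⟩ := Finset.mem_filter.1 (hT ▸ htT)
              have htb' : m' < t ∧ t < m := by
                rcases htb with h | h
                · exact absurd hmm (by linarith [h.1, h.2])
                · exact h
              have h3 : t ≤ s' := by
                by_contra hc
                push_neg at hc
                exact hts (hThigh t htT hc)
              exact Finset.mem_filter.2 ⟨htC, Or.inr ⟨htb'.1, lt_of_le_of_lt h3 hμ2⟩⟩
          have hcard' : ((crit S).filter (fun t => btwn t μ m')).card = n - 1 := by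
            rw [hT', Finset.card_erase_of_mem hsT, hcard]
          exact IH (n - 1) (Nat.sub_lt hn Nat.one_pos) μ m' hμC hm' hcard' hP2
  intro m m' hm hm' hP
  exact key _ m m' hm hm' rfl hP

end W

section Seed
variable {S : Finset (ℝ × ℝ)}

/-- near the slope of the segment `x y`, the two points are adjacent -/
lemma seed
    (hgen : ∀ p ∈ S, ∀ q ∈ S, ∀ r ∈ S, p ≠ q → p ≠ r → q ≠ r →
      ¬ Collinear ℝ ({p, q, r} : Set (ℝ × ℝ)))
    (hx : ∀ p ∈ S, ∀ q ∈ S, p ≠ q → p.1 ≠ q.1)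
    {x y : ℝ × ℝ} (hxS : x ∈ S) (hyS : y ∈ S) (hxy : x ≠ y) :
    ∃ m₁ : ℝ, m₁ ∉ crit S ∧ adj S m₁ x y := by
  set m₀ := slp x y with hm₀
  set B := (crit S).filter (fun t => m₀ < t) with hB
  set m₁ := if h : B.Nonempty then (m₀ + B.min' h) / 2 else m₀ + 1 with hm₁
  have hgt : m₀ < m₁ := by
    by_cases h : B.Nonempty
    · rw [hm₁, dif_pos h]
      have h1 : m₀ < B.min' h := (Finset.mem_filter.1 (B.min'_mem h)).2
      linarith
    · rw [hm₁, dif_neg h]; linarith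
  have hgap : ∀ t ∈ crit S, ¬ (m₀ < t ∧ t ≤ m₁) := by
    rintro t htC ⟨h1, h2⟩
    have htB : t ∈ B := Finset.mem_filter.2 ⟨htC, h1⟩
    have h3 : B.Nonempty := ⟨t, htB⟩
    have h4 : B.min' h3 ≤ t := B.min'_le t htB
    rw [hm₁, dif_pos h3] at h2
    have h5 : m₀ < B.min' h3 := (Finset.mem_filter.1 (B.min'_mem h3)).2
    linarith
  have hm₁C : m₁ ∉ crit S := fun hc => hgap m₁ hc ⟨hgt, le_refl m₁⟩
  refine ⟨m₁, hm₁C, ?_⟩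
  -- at m₀ the two residuals agree
  have heq : rho m₀ x = rho m₀ y := by
    have := rho_sub (hx x hxS y hyS hxy) m₀
    rw [hm₀] at *
    simp at this
    linarith
  intro w hw hwx hwy hb
  -- at m₀, w is strictly off the common value
  have hwne : rho m₀ w ≠ rho m₀ x := by
    intro hweq
    have h1 := rho_sub (hx w hw x hxS hwx) m₀
    rw [hweq, sub_self] at h1
    have h2 : w.1 - x.1 ≠ 0 := sub_ne_zero.2 (hx w hw x hxS hwx)
    have h3 : slp w x = m₀ := by
      rcases mul_eq_zero.1 h1.symm with h | h
      · exact absurd h h2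
      · exact sub_eq_zero.1 h
    have h4 : slp x w = slp x y := by
      rw [← slp_comm (hx w hw x hxS hwx)]; exact h3
    exact hgen x hxS w hw y hyS (Ne.symm hwx) hxy
      hwy (collinear_of_slp_eq (hx x hxS w hw (Ne.symm hwx))
        (hx x hxS y hyS hxy) h4)
  -- derive a flip of (w,x) or (w,y) inside the gap : contradiction
  have hcontr : ∀ p : ℝ × ℝ, p ∈ S → w ≠ p → flip m₀ m₁ w p → False := by
    intro p hp hwp hf
    have h1 := flip_btwn_slp hx hw hp hwp hf
    rcases h1 with ⟨h2, h3⟩ | ⟨h2, h3⟩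
    · exact hgap (slp w p) (slp_mem_crit hw hp hwp) ⟨h2, le_of_lt h3⟩
    · linarith [hgt]
  rcases lt_or_gt_of_ne hwne with h | h
  · rcases hb with ⟨h1, h2⟩ | ⟨h1, h2⟩
    · exact hcontr x hxS hwx (by unfold flip; nlinarith)
    · exact hcontr y hyS hwy (by unfold flip; rw [← heq]; nlinarith)
  · rcases hb with ⟨h1, h2⟩ | ⟨h1, h2⟩
    · exact hcontr y hyS hwy (by unfold flip; rw [← heq]; nlinarith)
    · exact hcontr x hxS hwx (by unfold flip; nlinarith)

end Seed

section Assembly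
variable {S : Finset (ℝ × ℝ)} {col : ℝ × ℝ → Fin 3}

theorem exists_rbw
    (hcolors : ∀ i : Fin 3, ∃ p ∈ S, col p = i)
    (hgen : ∀ p ∈ S, ∀ q ∈ S, ∀ r ∈ S, p ≠ q → p ≠ r → q ≠ r →
      ¬ Collinear ℝ ({p, q, r} : Set (ℝ × ℝ)))
    (hx : ∀ p ∈ S, ∀ q ∈ S, p ≠ q → p.1 ≠ q.1) :
    ∃ m : ℝ, m ∉ crit S ∧ rbw S col m := by
  by_contra hno
  push_neg at hno
  -- γ : the point with smallest x-coordinate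
  have hSne : S.Nonempty := by
    obtain ⟨p, hp, _⟩ := hcolors 0
    exact ⟨p, hp⟩
  obtain ⟨γ, hγS, hγmin⟩ := S.exists_min_image (fun p => p.1) hSne
  -- two other colors and witnesses
  obtain ⟨i, j, hij1, hij2, hij3⟩ :
      ∃ i j : Fin 3, i ≠ j ∧ i ≠ col γ ∧ j ≠ col γ := by
    have hall : ∀ b : Fin 3, ∃ i j : Fin 3, i ≠ j ∧ i ≠ b ∧ j ≠ b := by decide
    exact hall (col γ)
  obtain ⟨x, hxS, hxc⟩ := hcolors i
  obtain ⟨y, hyS, hyc⟩ := hcolors j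
  have hxy : x ≠ y := fun h => hij1 (by rw [← hxc, ← hyc, h])
  -- crit is nonempty
  have hcritne : (crit S).Nonempty := ⟨slp x y, slp_mem_crit hxS hyS hxy⟩
  -- strictness of the x-minimum
  have hγstrict : ∀ p ∈ S, p ≠ γ → γ.1 < p.1 := fun p hp hpγ =>
    lt_of_le_of_ne (hγmin p hp) (Ne.symm (hx p hp γ hγS hpγ))
  -- endpoints
  obtain ⟨mlo, hmlo⟩ : ∃ t : ℝ, t = (crit S).min' hcritne - 1 := ⟨_, rfl⟩
  obtain ⟨mhi, hmhi⟩ : ∃ t : ℝ, t = (crit S).max' hcritne + 1 := ⟨_, rfl⟩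
  have hmloC : mlo ∉ crit S := fun h => by
    have h2 : (crit S).min' hcritne ≤ mlo := (crit S).min'_le _ h
    rw [hmlo] at h2; linarith
  have hmhiC : mhi ∉ crit S := fun h => by
    have h2 : mhi ≤ (crit S).max' hcritne := (crit S).le_max' _ h
    rw [hmhi] at h2; linarith
  have hlo : ∀ p ∈ S, p ≠ γ → rho mlo γ < rho mlo p := by
    intro p hp hpγ
    rw [hmlo]
    have h1 := rho_sub (hx p hp γ hγS hpγ) ((crit S).min' hcritne - 1)
    have h2 : 0 < p.1 - γ.1 := sub_pos.2 (hγstrict p hp hpγ)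
    have h3 : (crit S).min' hcritne ≤ slp p γ :=
      (crit S).min'_le _ (slp_mem_crit hp hγS hpγ)
    nlinarith [h1, h2, h3, mul_pos h2
      (show (0:ℝ) < slp p γ - ((crit S).min' hcritne - 1) by linarith)]
  have hhi : ∀ p ∈ S, p ≠ γ → rho mhi p < rho mhi γ := by
    intro p hp hpγ
    rw [hmhi]
    have h1 := rho_sub (hx p hp γ hγS hpγ) ((crit S).max' hcritne + 1)
    have h2 : 0 < p.1 - γ.1 := sub_pos.2 (hγstrict p hp hpγ)
    have h3 : slp p γ ≤ (crit S).max' hcritne :=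
      (crit S).le_max' _ (slp_mem_crit hp hγS hpγ)
    nlinarith [h1, h2, h3, mul_pos h2
      (show (0:ℝ) < ((crit S).max' hcritne + 1) - slp p γ by linarith)]
  -- the invariants
  set E : ℝ → Prop := fun t => ∃ u ∈ S, ∃ v ∈ S,
    col u ≠ col v ∧ col u ≠ col γ ∧ col v ≠ col γ ∧ adj S t u v with hE
  set B : ℝ → Prop := fun t => ∃ u ∈ S, ∃ v ∈ S,
    col u ≠ col v ∧ col u ≠ col γ ∧ col v ≠ col γ ∧ adj S t u v ∧
    rho t γ < rho t u ∧ rho t γ < rho t v with hBdef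
  -- step instantiations
  have hsmk : ∀ m m' : ℝ,
      (∀ s ∈ crit S, btwn s m m' → ∀ s' ∈ crit S, btwn s' m m' → s = s') →
      (∀ p ∈ S, ∀ q ∈ S, p ≠ q → flip m m' p q →
        ∀ p' ∈ S, ∀ q' ∈ S, p' ≠ q' → flip m m' p' q' → slp p q = slp p' q') :=
    fun m m' hsingle p hp q hq hpq hf p' hp' q' hq' hpq' hf' =>
      hsingle (slp p q) (slp_mem_crit hp hq hpq) (flip_btwn_slp hx hp hq hpq hf)
        (slp p' q') (slp_mem_crit hp' hq' hpq') (flip_btwn_slp hx hp' hq' hpq' hf')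
  have hstepE : ∀ m m' : ℝ, m ∉ crit S → m' ∉ crit S →
      (∀ s ∈ crit S, btwn s m m' → ∀ s' ∈ crit S, btwn s' m m' → s = s') →
      E m → E m' := by
    intro m m' hm hm' hsingle hEm
    obtain ⟨u, hu, v, hv, c1, c2, c3, hadj⟩ := hEm
    have huv : u ≠ v := fun h => c1 (h ▸ rfl)
    have hmI := inj_of_not_crit hx hm
    have hmI' := inj_of_not_crit hx hm'
    rcases lt_or_gt_of_ne (hmI u hu v hv huv) with hord | hord
    · obtain ⟨a, ha, b', hb', hadj', hcc, _⟩ :=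
        step hgen hx hmI hmI' (hsmk m m' hsingle) (hno m hm) hu hv c1 hord hadj
      rcases hcc with ⟨e1, e2⟩ | ⟨e1, e2⟩
      · exact ⟨a, ha, b', hb', by rw [e1, e2]; exact c1, by rw [e1]; exact c2,
          by rw [e2]; exact c3, hadj'⟩
      · exact ⟨a, ha, b', hb', by rw [e1, e2]; exact c1.symm, by rw [e1]; exact c3,
          by rw [e2]; exact c2, hadj'⟩
    · obtain ⟨a, ha, b', hb', hadj', hcc, _⟩ :=
        step hgen hx hmI hmI' (hsmk m m' hsingle) (hno m hm) hv hu c1.symm hord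
          (fun z hz h1 h2 hbb => hadj z hz h2 h1 (Or.symm hbb))
      rcases hcc with ⟨e1, e2⟩ | ⟨e1, e2⟩
      · exact ⟨a, ha, b', hb', by rw [e1, e2]; exact c1.symm, by rw [e1]; exact c3,
          by rw [e2]; exact c2, hadj'⟩
      · exact ⟨a, ha, b', hb', by rw [e1, e2]; exact c1, by rw [e1]; exact c2,
          by rw [e2]; exact c3, hadj'⟩
  have hstepB : ∀ m m' : ℝ, m ∉ crit S → m' ∉ crit S →
      (∀ s ∈ crit S, btwn s m m' → ∀ s' ∈ crit S, btwn s' m m' → s = s') →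
      B m → B m' := by
    intro m m' hm hm' hsingle hBm
    obtain ⟨u, hu, v, hv, c1, c2, c3, hadj, g1, g2⟩ := hBm
    have huv : u ≠ v := fun h => c1 (h ▸ rfl)
    have hmI := inj_of_not_crit hx hm
    have hmI' := inj_of_not_crit hx hm'
    rcases lt_or_gt_of_ne (hmI u hu v hv huv) with hord | hord
    · obtain ⟨a, ha, b', hb', hadj', hcc, htrans⟩ :=
        step hgen hx hmI hmI' (hsmk m m' hsingle) (hno m hm) hu hv c1 hord hadj
      have hγ := htrans γ hγS (Ne.symm c2) (Ne.symm c3) g1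
      rcases hcc with ⟨e1, e2⟩ | ⟨e1, e2⟩
      · exact ⟨a, ha, b', hb', by rw [e1, e2]; exact c1, by rw [e1]; exact c2,
          by rw [e2]; exact c3, hadj', hγ.1, hγ.2⟩
      · exact ⟨a, ha, b', hb', by rw [e1, e2]; exact c1.symm, by rw [e1]; exact c3,
          by rw [e2]; exact c2, hadj', hγ.1, hγ.2⟩
    · obtain ⟨a, ha, b', hb', hadj', hcc, htrans⟩ :=
        step hgen hx hmI hmI' (hsmk m m' hsingle) (hno m hm) hv hu c1.symm hord
          (fun z hz h1 h2 hbb => hadj z hz h2 h1 (Or.symm hbb))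
      have hγ := htrans γ hγS (Ne.symm c3) (Ne.symm c2) g2
      rcases hcc with ⟨e1, e2⟩ | ⟨e1, e2⟩
      · exact ⟨a, ha, b', hb', by rw [e1, e2]; exact c1.symm, by rw [e1]; exact c3,
          by rw [e2]; exact c2, hadj', hγ.1, hγ.2⟩
      · exact ⟨a, ha, b', hb', by rw [e1, e2]; exact c1, by rw [e1]; exact c2,
          by rw [e2]; exact c3, hadj', hγ.1, hγ.2⟩
  -- seed E
  obtain ⟨ms, hmsC, hmsadj⟩ := seed hgen hx hxS hyS hxy
  have hEms : E ms := ⟨x, hxS, y, hyS, by rw [hxc, hyc]; exact hij1,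
    by rw [hxc]; exact hij2, by rw [hyc]; exact hij3, hmsadj⟩
  -- E at mlo
  have hElo : E mlo := walk hstepE ms mlo hmsC hmloC hEms
  -- B at mlo
  have hBlo : B mlo := by
    obtain ⟨u, hu, v, hv, c1, c2, c3, hadj⟩ := hElo
    have huγ : u ≠ γ := fun h => c2 (h ▸ rfl)
    have hvγ : v ≠ γ := fun h => c3 (h ▸ rfl)
    exact ⟨u, hu, v, hv, c1, c2, c3, hadj, hlo u hu huγ, hlo v hv hvγ⟩
  -- B at mhi : contradiction
  have hBhi : B mhi := walk hstepB mlo mhi hmloC hmhiC hBlo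
  obtain ⟨u, hu, v, hv, c1, c2, c3, hadj, g1, g2⟩ := hBhi
  have huγ : u ≠ γ := fun h => c2 (h ▸ rfl)
  exact absurd g1 (not_lt.2 (le_of_lt (hhi u hu huγ)))

end Assembly

set_option maxHeartbeats 1000000 in
theorem wedge_of_rbw {S : Finset (ℝ × ℝ)} {col : ℝ × ℝ → Fin 3}
    (hx : ∀ p ∈ S, ∀ q ∈ S, p ≠ q → p.1 ≠ q.1)
    {m : ℝ} (hm : m ∉ crit S) (hr : rbw S col m) :
    ∃ m₁ c₁ m₂ c₂ : ℝ, m₁ ≠ m₂ ∧ ∀ i : Fin 3,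
      ∃! p : ℝ × ℝ, p ∈ S ∧ col p = i ∧
        (p.2 - m₁ * p.1 - c₁) * (p.2 - m₂ * p.1 - c₂) < 0 := by
  obtain ⟨u, hu, v, hv, w, hw, c1, c2, c3, o1, o2, houter⟩ := hr
  have hmI : inj S m := inj_of_not_crit hx hm
  -- lower threshold
  set Lv := (S.filter (fun p => rho m p < rho m u)).image (rho m) with hLv
  set cl := if h : Lv.Nonempty then (Lv.max' h + rho m u) / 2 else rho m u - 1
    with hcl
  have hcl1 : cl < rho m u := by
    by_cases h : Lv.Nonempty
    · rw [hcl, dif_pos h]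
      have h1 : Lv.max' h ∈ Lv := Lv.max'_mem h
      obtain ⟨p, hp, hpv⟩ := Finset.mem_image.1 h1
      have := (Finset.mem_filter.1 hp).2
      rw [hpv] at this
      linarith
    · rw [hcl, dif_neg h]; linarith
  have hcl2 : ∀ p ∈ S, rho m p < rho m u → rho m p < cl := by
    intro p hp hlt
    have h0 : Lv.Nonempty := ⟨rho m p, Finset.mem_image.2
      ⟨p, Finset.mem_filter.2 ⟨hp, hlt⟩, rfl⟩⟩
    rw [hcl, dif_pos h0]
    have h1 : rho m p ≤ Lv.max' h0 := Lv.le_max' _ (Finset.mem_image.2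
      ⟨p, Finset.mem_filter.2 ⟨hp, hlt⟩, rfl⟩)
    have h2 : Lv.max' h0 < rho m u := by
      have h3 : Lv.max' h0 ∈ Lv := Lv.max'_mem h0
      obtain ⟨q, hq, hqv⟩ := Finset.mem_image.1 h3
      have := (Finset.mem_filter.1 hq).2
      rw [hqv] at this
      exact this
    linarith
  -- upper threshold
  set Hv := (S.filter (fun p => rho m w < rho m p)).image (rho m) with hHv
  set ch := if h : Hv.Nonempty then (rho m w + Hv.min' h) / 2 else rho m w + 1
    with hch
  have hch1 : rho m w < ch := by
    by_cases h : Hv.Nonempty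
    · rw [hch, dif_pos h]
      have h1 : Hv.min' h ∈ Hv := Hv.min'_mem h
      obtain ⟨p, hp, hpv⟩ := Finset.mem_image.1 h1
      have := (Finset.mem_filter.1 hp).2
      rw [hpv] at this
      linarith
    · rw [hch, dif_neg h]; linarith
  have hch2 : ∀ p ∈ S, rho m w < rho m p → ch < rho m p := by
    intro p hp hlt
    have h0 : Hv.Nonempty := ⟨rho m p, Finset.mem_image.2
      ⟨p, Finset.mem_filter.2 ⟨hp, hlt⟩, rfl⟩⟩
    rw [hch, dif_pos h0]
    have h1 : Hv.min' h0 ≤ rho m p := Hv.min'_le _ (Finset.mem_image.2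
      ⟨p, Finset.mem_filter.2 ⟨hp, hlt⟩, rfl⟩)
    have h2 : rho m w < Hv.min' h0 := by
      have h3 : Hv.min' h0 ∈ Hv := Hv.min'_mem h0
      obtain ⟨q, hq, hqv⟩ := Finset.mem_image.1 h3
      have := (Finset.mem_filter.1 hq).2
      rw [hqv] at this
      exact this
    linarith
  -- no point sits on the upper threshold ; a uniform positive gap
  have hSne : S.Nonempty := ⟨u, hu⟩
  set G := S.image (fun p => |rho m p - ch|) with hG
  have hGne : G.Nonempty := hSne.image _
  set η := G.min' hGne with hη
  have hηpos : 0 < η := by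
    have h1 : η ∈ G := G.min'_mem hGne
    obtain ⟨p, hp, hpv⟩ := Finset.mem_image.1 h1
    have hpch : rho m p ≠ ch := by
      intro he
      rcases lt_trichotomy (rho m p) (rho m w) with hh | hh | hh
      · linarith [hch1]
      · rw [hh] at he; linarith [hch1]
      · linarith [hch2 p hp hh]
    rw [← hpv]
    exact abs_pos.2 (sub_ne_zero.2 hpch)
  have hηle : ∀ p ∈ S, η ≤ |rho m p - ch| := by
    intro p hp
    rw [hη]
    exact G.min'_le _ (Finset.mem_image.2 ⟨p, hp, rfl⟩)
  -- bound on |x|-coordinates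
  set X := (S.image (fun p => |p.1|)).max' (hSne.image _) + 1 with hX
  have hXpos : 0 < X := by
    rw [hX]
    have h1 : (0:ℝ) ≤ (S.image (fun p => |p.1|)).max' (hSne.image _) := by
      obtain ⟨p, hp⟩ := hSne
      calc (0:ℝ) ≤ |p.1| := abs_nonneg _
      _ ≤ _ := (S.image (fun p => |p.1|)).le_max' _ (Finset.mem_image.2 ⟨p, hp, rfl⟩)
    linarith
  have hXle : ∀ p ∈ S, |p.1| < X := by
    intro p hp
    rw [hX]
    have := (S.image (fun p => |p.1|)).le_max' _ (Finset.mem_image.2 ⟨p, hp, rfl⟩)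
    linarith
  set δ := η / (2 * X) with hδ
  have hδpos : 0 < δ := by rw [hδ]; positivity
  -- sign preservation for the second factor
  have hsign : ∀ p ∈ S, (rho (m + δ) p - ch < 0 ↔ rho m p - ch < 0) := by
    intro p hp
    have e1 : rho (m + δ) p = rho m p - δ * p.1 := by unfold rho; ring
    have e2 : |δ * p.1| < η := by
      rw [abs_mul, abs_of_pos hδpos]
      calc δ * |p.1| < δ * X := by
            apply mul_lt_mul_of_pos_left (hXle p hp) hδpos
      _ = η / 2 := by rw [hδ]; field_simp
      _ < η := by linarith
    have e3 : η ≤ |rho m p - ch| := hηle p hp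
    have e4 : |δ * p.1| < |rho m p - ch| := lt_of_lt_of_le e2 e3
    rw [e1]
    rcases abs_cases (rho m p - ch) with ⟨h1, _⟩ | ⟨h1, _⟩ <;>
      rcases abs_cases (δ * p.1) with ⟨h2, _⟩ | ⟨h2, _⟩ <;>
      constructor <;> intro <;> nlinarith
  -- capture characterization
  have hcap : ∀ p ∈ S,
      ((rho m p - cl) * (rho (m + δ) p - ch) < 0 ↔ (p = u ∨ p = v ∨ p = w)) := by
    intro p hp
    constructor
    · intro hneg
      by_contra hcon
      push_neg at hcon
      obtain ⟨n1, n2, n3⟩ := hcon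
      rcases houter p hp n1 n2 n3 with hlt | hgt
      · have a1 : rho m p < cl := hcl2 p hp hlt
        have a2 : rho m p - ch < 0 := by linarith [hch1, o1, o2]
        have a3 : rho (m + δ) p - ch < 0 := (hsign p hp).2 a2
        nlinarith
      · have a1 : ch < rho m p := hch2 p hp hgt
        have a2 : ¬ (rho (m + δ) p - ch < 0) := by
          rw [hsign p hp]; linarith
        push_neg at a2
        have a3 : cl < rho m p := by linarith [hcl1, o1, o2, hch1]
        nlinarith
    · intro hmem
      have a1 : cl < rho m p ∧ rho m p < ch := by
        rcases hmem with rfl | rfl | rfl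
        · exact ⟨hcl1, by linarith [o1, o2, hch1]⟩
        · exact ⟨by linarith [hcl1, o1], by linarith [o2, hch1]⟩
        · exact ⟨by linarith [hcl1, o1, o2], hch1⟩
      have a2 : rho (m + δ) p - ch < 0 := (hsign p hp).2 (by linarith [a1.2])
      nlinarith [a1.1, a2]
  -- final wedge
  refine ⟨m, cl, m + δ, ch, by intro h; linarith, ?_⟩
  intro i
  -- i is one of the three colors
  have hColl : ∀ a b c d : Fin 3, a ≠ b → a ≠ c → b ≠ c →
      d = a ∨ d = b ∨ d = c := by decide
  have hts : ∃ t, (t = u ∨ t = v ∨ t = w) ∧ col t = i := by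
    rcases hColl (col u) (col v) (col w) i c1 c2 c3 with h | h | h
    · exact ⟨u, Or.inl rfl, h.symm⟩
    · exact ⟨v, Or.inr (Or.inl rfl), h.symm⟩
    · exact ⟨w, Or.inr (Or.inr rfl), h.symm⟩
  obtain ⟨t, htm, htc⟩ := hts
  have htS : t ∈ S := by rcases htm with rfl | rfl | rfl <;> assumption
  have hkey : ∀ p : ℝ × ℝ, (p.2 - m * p.1 - cl) * (p.2 - (m + δ) * p.1 - ch) =
      (rho m p - cl) * (rho (m + δ) p - ch) := by
    intro p; unfold rho; ring
  refine ⟨t, ⟨htS, htc, ?_⟩, ?_⟩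
  · rw [hkey]
    exact (hcap t htS).2 htm
  · rintro q ⟨hqS, hqc, hqin⟩
    rw [hkey] at hqin
    have hqm := (hcap q hqS).1 hqin
    -- q and t are both in {u,v,w} with the same color : equal
    rcases hqm with rfl | rfl | rfl <;> rcases htm with rfl | rfl | rfl <;>
      first
        | rfl
        | exact absurd (hqc.trans htc.symm) c1
        | exact absurd (hqc.trans htc.symm) c2
        | exact absurd (hqc.trans htc.symm) c3
        | exact absurd (htc.trans hqc.symm) c1
        | exact absurd (htc.trans hqc.symm) c2
        | exact absurd (htc.trans hqc.symm) c3


end Stmt5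

/-- **A double wedge containing exactly one point of each color.**
For a finite 3-colored point set in the plane (colors `Fin 3`: 0 = red,
1 = green, 2 = blue), each color present, in general position (no three
collinear) and with distinct x-coordinates, there is a double wedge
`{(x,y) | (y - m₁x - c₁)(y - m₂x - c₂) < 0}` (with `m₁ ≠ m₂`) containing
exactly one point of each color. -/
theorem stmt_5
    (S : Finset (ℝ × ℝ))
    (color : ℝ × ℝ → Fin 3)
    (hcolors : ∀ i : Fin 3, ∃ p ∈ S, color p = i)
    (hgen : ∀ p ∈ S, ∀ q ∈ S, ∀ r ∈ S, p ≠ q → p ≠ r → q ≠ r →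
      ¬ Collinear ℝ ({p, q, r} : Set (ℝ × ℝ)))
    (hx : ∀ p ∈ S, ∀ q ∈ S, p ≠ q → p.1 ≠ q.1) :
    ∃ m₁ c₁ m₂ c₂ : ℝ, m₁ ≠ m₂ ∧ ∀ i : Fin 3,
      ∃! p : ℝ × ℝ, p ∈ S ∧ color p = i ∧
        (p.2 - m₁ * p.1 - c₁) * (p.2 - m₂ * p.1 - c₂) < 0 := by
  obtain ⟨m, hm, hr⟩ := Stmt5.exists_rbw hcolors hgen hx
  exact Stmt5.wedge_of_rbw hx hm hr
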